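/- Let N(m) denote the cardinality of the OP-LOCO code OPC(m). Then (N(m))^{1/m} → (7 + √65)/2 as m → ∞. (Hence the capacity of the OP-LOCO constraint is log₂((7 + √65)/2) ≈ 2.9129 input bits per coded symbol.) -/

import Mathlib

/-- The OP-LOCO code: words of length `m` over the alphabet `{0,...,7}`
(position `m-1` most significant) containing no contiguous subword `u 2 v` with
`u, v ∈ {0,1,4,5}` and no contiguous subword `u 5 v` with `u, v ∈ {2,3,6,7}`. -/
def OPC (m : ℕ) : Set (Fin m → Fin 8) :=
  {c | ∀ i : ℕ, ∀ h : i + 2 < m,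
      ¬((c ⟨i + 2, h⟩ ∈ ({0, 1, 4, 5} : Set (Fin 8)) ∧ c ⟨i + 1, by omega⟩ = 2 ∧
            c ⟨i, by omega⟩ ∈ ({0, 1, 4, 5} : Set (Fin 8))) ∨
        (c ⟨i + 2, h⟩ ∈ ({2, 3, 6, 7} : Set (Fin 8)) ∧ c ⟨i + 1, by omega⟩ = 5 ∧
            c ⟨i, by omega⟩ ∈ ({2, 3, 6, 7} : Set (Fin 8))))}

namespace OPL

def Af : Finset (Fin 8) := {0,1,4,5}
def Bf : Finset (Fin 8) := {2,3,6,7}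

def bad (x y z : Fin 8) : Prop := (x ∈ Af ∧ y = 2 ∧ z ∈ Af) ∨ (x ∈ Bf ∧ y = 5 ∧ z ∈ Bf)

instance : ∀ x y z, Decidable (bad x y z) := fun _ _ _ => inferInstanceAs (Decidable (_ ∨ _))

def valid (m : ℕ) (c : Fin m → Fin 8) : Prop :=
  ∀ i : ℕ, ∀ h : i + 2 < m, bad (c ⟨i+2, h⟩) (c ⟨i+1, by omega⟩) (c ⟨i, by omega⟩) → False

instance (m : ℕ) (c : Fin m → Fin 8) : Decidable (valid m c) := by
  unfold valid
  exact decidable_of_iff (∀ i < m, ∀ h : i + 2 < m,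
    bad (c ⟨i+2, h⟩) (c ⟨i+1, by omega⟩) (c ⟨i, by omega⟩) → False)
    ⟨fun H i h => H i (by omega) h, fun H i _ h => H i h⟩

lemma mem_OPC_iff (m : ℕ) (c : Fin m → Fin 8) : c ∈ OPC m ↔ valid m c := by
  unfold OPC valid bad Af Bf
  simp only [Set.mem_setOf_eq, Set.mem_insert_iff, Set.mem_singleton_iff, Finset.mem_insert,
    Finset.mem_singleton]

def Sp (m : ℕ) (c : Fin (m+2) → Fin 8) : Prop :=
  (c 1 ∈ Af ∧ c 0 = 2) ∨ (c 1 ∈ Bf ∧ c 0 = 5)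

instance (m : ℕ) (c : Fin (m+2) → Fin 8) : Decidable (Sp m c) := by
  unfold Sp; infer_instance

def Nn (m : ℕ) : ℕ := (Finset.univ.filter (fun c : Fin m → Fin 8 => valid m c)).card

def sn (m : ℕ) : ℕ :=
  (Finset.univ.filter (fun c : Fin (m+2) → Fin 8 => valid (m+2) c ∧ Sp m c)).card

lemma Nn2 : Nn 2 = 64 := by decide
set_option maxRecDepth 10000 in
lemma Nn3 : Nn 3 = 480 := by decide
lemma sn0 : sn 0 = 8 := by decide

-- counting auxiliary
def kA (x y : Fin 8) : ℕ := (Finset.univ.filter (fun z => ¬ bad x y z)).card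
def kB (x y : Fin 8) : ℕ :=
  (Finset.univ.filter (fun z => ¬ bad x y z ∧ ((y ∈ Af ∧ z = 2) ∨ (y ∈ Bf ∧ z = 5)))).card

lemma kA_eq : ∀ x y, kA x y = if (x ∈ Af ∧ y = 2) ∨ (x ∈ Bf ∧ y = 5) then 4 else 8 := by decide
lemma kB_eq : ∀ x y, kB x y = if (x ∈ Af ∧ y = 2) ∨ (x ∈ Bf ∧ y = 5) then 0 else 1 := by decide

set_option maxHeartbeats 1000000 in
lemma valid_cons (m : ℕ) (z : Fin 8) (c : Fin (m+2) → Fin 8) :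
    valid (m+3) (Fin.cons z c) ↔ valid (m+2) c ∧ ¬ bad (c 1) (c 0) z := by
  have h1 : (1 : Fin (m+2)) = ⟨1, by omega⟩ := rfl
  have h0 : (0 : Fin (m+2)) = ⟨0, by omega⟩ := rfl
  constructor
  · intro H
    refine ⟨fun i h hb => ?_, fun hb => ?_⟩
    · refine H (i+1) (by omega) ?_
      show bad ((Fin.cons z c : Fin (m+3) → Fin 8) ((⟨i+2, by omega⟩ : Fin (m+2)).succ))
        ((Fin.cons z c : Fin (m+3) → Fin 8) ((⟨i+1, by omega⟩ : Fin (m+2)).succ))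
        ((Fin.cons z c : Fin (m+3) → Fin 8) ((⟨i, by omega⟩ : Fin (m+2)).succ))
      rw [Fin.cons_succ, Fin.cons_succ, Fin.cons_succ]
      exact hb
    · refine H 0 (by omega) ?_
      show bad ((Fin.cons z c : Fin (m+3) → Fin 8) ((⟨1, by omega⟩ : Fin (m+2)).succ))
        ((Fin.cons z c : Fin (m+3) → Fin 8) ((⟨0, by omega⟩ : Fin (m+2)).succ))
        ((Fin.cons z c : Fin (m+3) → Fin 8) 0)
      rw [Fin.cons_succ, Fin.cons_succ, Fin.cons_zero]
      rw [h1, h0] at hb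
      exact hb
  · rintro ⟨H, hz⟩ i h hb
    match i, h, hb with
    | 0, h, hb =>
      rw [h1, h0] at hz
      refine hz ?_
      have e : bad ((Fin.cons z c : Fin (m+3) → Fin 8) ((⟨1, by omega⟩ : Fin (m+2)).succ))
          ((Fin.cons z c : Fin (m+3) → Fin 8) ((⟨0, by omega⟩ : Fin (m+2)).succ))
          ((Fin.cons z c : Fin (m+3) → Fin 8) 0) := hb
      rwa [Fin.cons_succ, Fin.cons_succ, Fin.cons_zero] at e
    | Nat.succ j, h, hb =>
      refine H j (by omega) ?_
      have e : bad ((Fin.cons z c : Fin (m+3) → Fin 8) ((⟨j+2, by omega⟩ : Fin (m+2)).succ))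
          ((Fin.cons z c : Fin (m+3) → Fin 8) ((⟨j+1, by omega⟩ : Fin (m+2)).succ))
          ((Fin.cons z c : Fin (m+3) → Fin 8) ((⟨j, by omega⟩ : Fin (m+2)).succ)) := hb
      rwa [Fin.cons_succ, Fin.cons_succ, Fin.cons_succ] at e

lemma Sp_cons (m : ℕ) (z : Fin 8) (c : Fin (m+2) → Fin 8) :
    Sp (m+1) (Fin.cons z c) ↔ ((c 0 ∈ Af ∧ z = 2) ∨ (c 0 ∈ Bf ∧ z = 5)) := by
  unfold Sp
  have hone : (1 : Fin (m+3)) = (0 : Fin (m+2)).succ := by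
    ext; simp
  rw [hone, Fin.cons_succ, Fin.cons_zero]

lemma card_filter_succ (n : ℕ) (P : (Fin (n+1) → Fin 8) → Prop) [DecidablePred P] :
    (Finset.univ.filter P).card
      = ∑ c : Fin n → Fin 8, (Finset.univ.filter (fun z : Fin 8 => P (Fin.cons z c))).card := by
  rw [Finset.card_eq_sum_card_fiberwise
    (f := fun d => Fin.tail d) (t := Finset.univ) (fun x _ => Finset.mem_univ _)]
  refine Finset.sum_congr rfl (fun c _ => ?_)
  refine Finset.card_bij' (fun d _ => d 0) (fun z _ => Fin.cons z c) ?_ ?_ ?_ ?_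
  · intro d hd
    simp only [Finset.mem_filter, Finset.mem_univ, true_and] at hd ⊢
    obtain ⟨hP, ht⟩ := hd
    rw [show Fin.cons (d 0) c = d by rw [← ht]; exact Fin.cons_self_tail d]
    exact hP
  · intro z hz
    simp only [Finset.mem_filter, Finset.mem_univ, true_and] at hz ⊢
    refine ⟨hz, ?_⟩
    simp
  · intro d hd
    simp only [Finset.mem_filter, Finset.mem_univ, true_and] at hd
    show Fin.cons (d 0) c = d
    rw [← hd.2]; exact Fin.cons_self_tail d
  · intro z _
    simp


lemma inner_card_A (m : ℕ) (c : Fin (m+2) → Fin 8) :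
    (Finset.univ.filter (fun z : Fin 8 => valid (m+3) (Fin.cons z c))).card
      = if valid (m+2) c then (if Sp m c then 4 else 8) else 0 := by
  by_cases hv : valid (m+2) c
  · rw [if_pos hv]
    have e : (Finset.univ.filter (fun z : Fin 8 => valid (m+3) (Fin.cons z c)))
        = Finset.univ.filter (fun z : Fin 8 => ¬ bad (c 1) (c 0) z) := by
      refine Finset.filter_congr (fun z _ => ?_)
      rw [valid_cons]
      simp [hv]
    rw [e]
    have := kA_eq (c 1) (c 0)
    unfold kA at this
    rw [this]
    by_cases hs : Sp m c
    · rw [if_pos hs, if_pos (by unfold Sp at hs; exact hs)]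
    · rw [if_neg hs, if_neg (by unfold Sp at hs; exact hs)]
  · rw [if_neg hv]
    rw [Finset.filter_false_of_mem (fun z _ => by rw [valid_cons]; tauto), Finset.card_empty]

lemma inner_card_B (m : ℕ) (c : Fin (m+2) → Fin 8) :
    (Finset.univ.filter
        (fun z : Fin 8 => valid (m+3) (Fin.cons z c) ∧ Sp (m+1) (Fin.cons z c))).card
      = if valid (m+2) c then (if Sp m c then 0 else 1) else 0 := by
  by_cases hv : valid (m+2) c
  · rw [if_pos hv]
    have e : (Finset.univ.filter
          (fun z : Fin 8 => valid (m+3) (Fin.cons z c) ∧ Sp (m+1) (Fin.cons z c)))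
        = Finset.univ.filter
            (fun z : Fin 8 => ¬ bad (c 1) (c 0) z ∧ ((c 0 ∈ Af ∧ z = 2) ∨ (c 0 ∈ Bf ∧ z = 5))) := by
      refine Finset.filter_congr (fun z _ => ?_)
      rw [valid_cons, Sp_cons]
      simp [hv]
    rw [e]
    have := kB_eq (c 1) (c 0)
    unfold kB at this
    rw [this]
    by_cases hs : Sp m c
    · rw [if_pos hs, if_pos (by unfold Sp at hs; exact hs)]
    · rw [if_neg hs, if_neg (by unfold Sp at hs; exact hs)]
  · rw [if_neg hv]
    rw [Finset.filter_false_of_mem (fun z _ => by rw [valid_cons]; tauto), Finset.card_empty]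

lemma L1 (m : ℕ) : Nn (m+3) + 4 * sn m = 8 * Nn (m+2) := by
  have h3 : Nn (m+3)
      = ∑ c : Fin (m+2) → Fin 8, (if valid (m+2) c then (if Sp m c then 4 else 8) else 0) := by
    unfold Nn
    rw [card_filter_succ (m+2) (valid (m+3))]
    exact Finset.sum_congr rfl (fun c _ => inner_card_A m c)
  have hs : sn m = ∑ c : Fin (m+2) → Fin 8, (if valid (m+2) c ∧ Sp m c then 1 else 0) := by
    unfold sn
    rw [Finset.card_filter]
  have h2 : Nn (m+2) = ∑ c : Fin (m+2) → Fin 8, (if valid (m+2) c then 1 else 0) := by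
    unfold Nn
    rw [Finset.card_filter]
  rw [h3, hs, h2, Finset.mul_sum, Finset.mul_sum, ← Finset.sum_add_distrib]
  refine Finset.sum_congr rfl (fun c _ => ?_)
  by_cases hv : valid (m+2) c <;> by_cases hsp : Sp m c <;> simp [hv, hsp]

lemma L2 (m : ℕ) : sn (m+1) + sn m = Nn (m+2) := by
  have h3 : sn (m+1)
      = ∑ c : Fin (m+2) → Fin 8, (if valid (m+2) c then (if Sp m c then 0 else 1) else 0) := by
    unfold sn
    rw [card_filter_succ (m+2) (fun d => valid (m+3) d ∧ Sp (m+1) d)]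
    exact Finset.sum_congr rfl (fun c _ => inner_card_B m c)
  have hs : sn m = ∑ c : Fin (m+2) → Fin 8, (if valid (m+2) c ∧ Sp m c then 1 else 0) := by
    unfold sn
    rw [Finset.card_filter]
  have h2 : Nn (m+2) = ∑ c : Fin (m+2) → Fin 8, (if valid (m+2) c then 1 else 0) := by
    unfold Nn
    rw [Finset.card_filter]
  rw [h3, hs, h2, ← Finset.sum_add_distrib]
  refine Finset.sum_congr rfl (fun c _ => ?_)
  by_cases hv : valid (m+2) c <;> by_cases hsp : Sp m c <;> simp [hv, hsp]

lemma Nrec (m : ℕ) : Nn (m+4) = 7 * Nn (m+3) + 4 * Nn (m+2) := by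
  have a := L1 m
  have b : Nn (m+4) + 4 * sn (m+1) = 8 * Nn (m+3) := L1 (m+1)
  have c : sn (m+1) + sn m = Nn (m+2) := L2 m
  omega

lemma Nn_pos (m : ℕ) : 0 < Nn m := by
  refine Finset.card_pos.mpr ⟨fun _ => 0, ?_⟩
  simp only [Finset.mem_filter, Finset.mem_univ, true_and]
  intro i h hb
  have : bad 0 0 0 := hb
  exact absurd this (by decide)


noncomputable def sq : ℝ := Real.sqrt 65

lemma sq_sq : sq ^ 2 = 65 := Real.sq_sqrt (by norm_num)

lemma sq_gt : 8 < sq := by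
  have : (8 : ℝ) = Real.sqrt 64 := by
    rw [show (64:ℝ) = 8^2 by norm_num, Real.sqrt_sq (by norm_num)]
  rw [this]
  exact Real.sqrt_lt_sqrt (by norm_num) (by norm_num)

lemma sq_lt : sq < 9 := by
  have : (9 : ℝ) = Real.sqrt 81 := by
    rw [show (81:ℝ) = 9^2 by norm_num, Real.sqrt_sq (by norm_num)]
  rw [this]
  exact Real.sqrt_lt_sqrt (by norm_num) (by norm_num)

noncomputable def lam : ℝ := (7 + sq) / 2
noncomputable def mu : ℝ := (7 - sq) / 2

lemma lam_gt1 : 1 < lam := by unfold lam; have := sq_gt; linarith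
lemma lam_pos : 0 < lam := lt_trans one_pos lam_gt1
lemma mu_neg : mu < 0 := by unfold mu; have := sq_gt; linarith
lemma mu_gt : -1 < mu := by unfold mu; have := sq_lt; linarith
lemma lam_ne : lam ≠ 0 := ne_of_gt lam_pos
lemma mu_ne : mu ≠ 0 := ne_of_lt mu_neg
lemma lam_sub_mu : lam - mu = sq := by unfold lam mu; ring
lemma lam_sq : lam ^ 2 = 7 * lam + 4 := by
  unfold lam
  linear_combination sq_sq / 4
lemma mu_sq : mu ^ 2 = 7 * mu + 4 := by
  unfold mu
  linear_combination sq_sq / 4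

noncomputable def al : ℝ := (480 - 64 * mu) / (lam ^ 2 * (lam - mu))
noncomputable def be : ℝ := (64 * lam - 480) / (mu ^ 2 * (lam - mu))

lemma sub_ne : lam - mu ≠ 0 := by
  rw [lam_sub_mu]; have := sq_gt; intro h; linarith

lemma al_pos : 0 < al := by
  unfold al
  apply div_pos
  · have := mu_neg; linarith
  · apply mul_pos (pow_pos lam_pos 2)
    rw [lam_sub_mu]; have := sq_gt; linarith

lemma base2 : al * lam ^ 2 + be * mu ^ 2 = 64 := by
  unfold al be
  have h1 := lam_ne
  have h2 := mu_ne
  have h3 := sub_ne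
  field_simp
  ring

lemma base3 : al * lam ^ 3 + be * mu ^ 3 = 480 := by
  unfold al be
  have h1 := lam_ne
  have h2 := mu_ne
  have h3 := sub_ne
  field_simp
  ring

lemma closed : ∀ k : ℕ, (Nn (k+2) : ℝ) = al * lam ^ (k+2) + be * mu ^ (k+2) := by
  have key : ∀ k : ℕ, ((Nn (k+2) : ℝ) = al * lam ^ (k+2) + be * mu ^ (k+2))
      ∧ ((Nn (k+3) : ℝ) = al * lam ^ (k+3) + be * mu ^ (k+3)) := by
    intro k
    induction k with
    | zero =>
      constructor
      · rw [Nn2]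
        push_cast
        rw [base2]
      · rw [Nn3]
        push_cast
        rw [base3]
    | succ n ih =>
      refine ⟨ih.2, ?_⟩
      have hrec : (Nn (n+4) : ℝ) = 7 * (Nn (n+3) : ℝ) + 4 * (Nn (n+2) : ℝ) := by
        rw [Nrec n]; push_cast; ring
      have : (Nn (n+1+3) : ℝ) = (Nn (n+4) : ℝ) := rfl
      rw [this, hrec, ih.1, ih.2]
      linear_combination (-(al * lam^(n+2))) * lam_sq + (-(be * mu^(n+2))) * mu_sq
  exact fun k => (key k).1


noncomputable def tt (k : ℕ) : ℝ := al + be * (mu / lam) ^ k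

lemma Nn_eq_pow_mul (k : ℕ) (hk : 2 ≤ k) : (Nn k : ℝ) = lam ^ k * tt k := by
  obtain ⟨j, rfl⟩ : ∃ j, k = j + 2 := ⟨k - 2, by omega⟩
  rw [closed j]
  unfold tt
  rw [div_pow]
  have h1 := lam_ne
  field_simp

lemma tt_pos (k : ℕ) (hk : 2 ≤ k) : 0 < tt k := by
  have h1 : (0:ℝ) < (Nn k : ℝ) := by exact_mod_cast Nn_pos k
  have h2 : (0:ℝ) < lam ^ k := pow_pos lam_pos k
  have h3 := Nn_eq_pow_mul k hk
  by_contra h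
  push_neg at h
  nlinarith

lemma tt_tendsto : Filter.Tendsto tt Filter.atTop (nhds al) := by
  have hr : |mu / lam| < 1 := by
    rw [abs_div, abs_of_pos lam_pos, div_lt_one lam_pos, abs_of_neg mu_neg]
    have := mu_gt
    have := lam_gt1
    linarith
  have h0 : Filter.Tendsto (fun k : ℕ => (mu/lam)^k) Filter.atTop (nhds 0) :=
    tendsto_pow_atTop_nhds_zero_of_abs_lt_one hr
  have h1 := h0.const_mul be
  have h2 := (tendsto_const_nhds (x := al) (f := Filter.atTop (α := ℕ))).add h1
  simpa using (show Filter.Tendsto tt _ _ from h2)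

lemma log_tt_tendsto :
    Filter.Tendsto (fun k => Real.log (tt k)) Filter.atTop (nhds (Real.log al)) :=
  ((Real.continuousAt_log (ne_of_gt al_pos)).tendsto).comp tt_tendsto

lemma ncard_OPC (m : ℕ) : (OPC m).ncard = Nn m := by
  have h : OPC m = ((Finset.univ.filter (fun c : Fin m → Fin 8 => valid m c)) : Finset _) := by
    ext c
    simpa using (mem_OPC_iff m c)
  rw [h, Set.ncard_coe_finset]
  rfl

lemma rpow_eq (m : ℕ) (hm : 2 ≤ m) :
    ((Nn m : ℝ)) ^ (1/(m:ℝ))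
      = Real.exp (Real.log lam + Real.log (tt m) * (1/(m:ℝ))) := by
  have hN : (0:ℝ) < (Nn m : ℝ) := by exact_mod_cast Nn_pos m
  rw [Real.rpow_def_of_pos hN]
  congr 1
  rw [Nn_eq_pow_mul m hm,
    Real.log_mul (pow_ne_zero _ lam_ne) (ne_of_gt (tt_pos m hm)), Real.log_pow]
  have hm0 : (m:ℝ) ≠ 0 := Nat.cast_ne_zero.mpr (by omega)
  field_simp

end OPL

theorem stmt13 :
    Filter.Tendsto (fun m : ℕ => ((OPC m).ncard : ℝ) ^ (1 / (m : ℝ)))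
      Filter.atTop (nhds ((7 + Real.sqrt 65) / 2)) := by
  have h4 : Filter.Tendsto (fun m : ℕ => Real.log OPL.lam + Real.log (OPL.tt m) * (1/(m:ℝ)))
      Filter.atTop (nhds (Real.log OPL.lam)) := by
    have hd : Filter.Tendsto (fun m : ℕ => Real.log (OPL.tt m) / (m:ℝ))
        Filter.atTop (nhds 0) :=
      OPL.log_tt_tendsto.div_atTop (tendsto_natCast_atTop_atTop (R := ℝ))
    have h2 := (tendsto_const_nhds (x := Real.log OPL.lam)
      (f := Filter.atTop (α := ℕ))).add hd
    simpa [mul_one_div, div_eq_mul_inv] using h2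
  have h5 : Filter.Tendsto
      (fun m : ℕ => Real.exp (Real.log OPL.lam + Real.log (OPL.tt m) * (1/(m:ℝ))))
      Filter.atTop (nhds (Real.exp (Real.log OPL.lam))) :=
    (Real.continuous_exp.tendsto _).comp h4
  rw [Real.exp_log OPL.lam_pos] at h5
  have heq : (fun m : ℕ => Real.exp (Real.log OPL.lam + Real.log (OPL.tt m) * (1/(m:ℝ))))
      =ᶠ[Filter.atTop] (fun m : ℕ => ((OPC m).ncard : ℝ) ^ (1 / (m : ℝ))) := by
    refine Filter.eventually_atTop.mpr ⟨2, fun m hm => ?_⟩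
    show Real.exp _ = ((OPC m).ncard : ℝ) ^ (1 / (m:ℝ))
    rw [OPL.ncard_OPC m, OPL.rpow_eq m hm]
  have := h5.congr' heq
  exact this
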